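/- In Jia's dcpo P = ℕ × ℕ × (ℕ ∪ {∞}) with the order (i₁,j₁,m₁) ≤ (i₂,j₂,m₂) iff (i₁=i₂, j₁=j₂, m₁ ≤ m₂) or (i₂=i₁+1, m₁ ≤ j₂, m₂=∞), the intersection ↑(1,2,1) ∩ ↑(1,3,1) equals {(2,j,∞) : j ∈ ℕ} and is not compact in the Scott topology; hence ΣP is not coherent. -/

import Mathlib

/-- Jia's dcpo: the underlying set `ℕ × ℕ × (ℕ ∪ {∞})` (positive naturals). -/
structure JiaP where
  i : ℕ+
  j : ℕ+
  m : WithTop ℕ+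

namespace JiaP

/-- `(i₁,j₁,m₁) ≤ (i₂,j₂,m₂)` iff `i₁ = i₂, j₁ = j₂, m₁ ≤ m₂`, or
`i₂ = i₁ + 1, m₁ ≤ j₂, m₂ = ∞`. -/
instance : PartialOrder JiaP where
  le x y := (x.i = y.i ∧ x.j = y.j ∧ x.m ≤ y.m) ∨
    (y.i = x.i + 1 ∧ x.m ≤ (y.j : WithTop ℕ+) ∧ y.m = ⊤)
  le_refl x := Or.inl ⟨rfl, rfl, le_refl _⟩
  le_trans x y z h g := by
    rcases h with ⟨h1, h2, h3⟩ | ⟨h1, h2, h3⟩ <;> rcases g with ⟨g1, g2, g3⟩ | ⟨g1, g2, g3⟩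
    · exact Or.inl ⟨h1.trans g1, h2.trans g2, h3.trans g3⟩
    · exact Or.inr ⟨by rw [g1, ← h1], h3.trans g2, g3⟩
    · exact Or.inr ⟨by rw [← g1, h1], by rw [← g2]; exact h2, top_le_iff.mp (h3 ▸ g3)⟩
    · exact absurd (top_le_iff.mp (h3 ▸ g2)) WithTop.coe_ne_top
  le_antisymm x y h g := by
    rcases h with ⟨h1, h2, h3⟩ | ⟨h1, h2, h3⟩ <;> rcases g with ⟨g1, g2, g3⟩ | ⟨g1, g2, g3⟩
    · cases x; cases y
      simp only [JiaP.mk.injEq]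
      exact ⟨h1, h2, le_antisymm h3 g3⟩
    · exfalso
      have hh := h1.symm.trans g1
      have : (y.i : ℕ) = (y.i : ℕ) + 1 := by exact_mod_cast congrArg PNat.val hh
      omega
    · exfalso
      have hh := g1.symm.trans h1
      have : (x.i : ℕ) = (x.i : ℕ) + 1 := by exact_mod_cast congrArg PNat.val hh
      omega
    · exfalso
      have hh : x.i = x.i + 1 + 1 := by rw [← h1]; exact g1
      have : (x.i : ℕ) = (x.i : ℕ) + 1 + 1 := by exact_mod_cast congrArg PNat.val hh
      omega

end JiaP


namespace JiaPAux

open Set Topology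

lemma le_def (x y : JiaP) : x ≤ y ↔ (x.i = y.i ∧ x.j = y.j ∧ x.m ≤ y.m) ∨
    (y.i = x.i + 1 ∧ x.m ≤ (y.j : WithTop ℕ+) ∧ y.m = ⊤) := Iff.rfl

lemma one_le' (x : WithTop ℕ+) : ((1:ℕ+) : WithTop ℕ+) ≤ x := by
  induction x using WithTop.recTopCoe with
  | top => exact le_top
  | coe n => exact_mod_cast n.one_le

lemma pnat_ne_add_one (n : ℕ+) : n ≠ n + 1 := by
  intro h
  have : (n:ℕ) = (n:ℕ) + 1 := by exact_mod_cast congrArg PNat.val h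
  omega

/-- In any directed set with a LUB, some element agrees with the LUB in the
first two coordinates. -/
lemma exists_eq_ij {d : Set JiaP} (hne : d.Nonempty) (hdir : DirectedOn (· ≤ ·) d)
    {a : JiaP} (hlub : IsLUB d a) : ∃ b ∈ d, b.i = a.i ∧ b.j = a.j := by
  by_contra hcon
  push_neg at hcon
  have key : ∀ b ∈ d, a.i = b.i + 1 ∧ b.m ≤ (a.j : WithTop ℕ+) := by
    intro b hb
    rcases hlub.1 hb with ⟨h1, h2, _⟩ | ⟨h1, h2, _⟩
    · exact absurd h2 (hcon b hb h1)
    · exact ⟨h1, h2⟩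
  obtain ⟨b0, hb0⟩ := hne
  have hij : ∀ b ∈ d, b.i = b0.i ∧ b.j = b0.j := by
    intro b hb
    obtain ⟨c, hc, hbc, hb0c⟩ := hdir b hb b0 hb0
    have step : ∀ x ∈ d, x ≤ c → x.i = c.i ∧ x.j = c.j := by
      intro x hx hxc
      rcases hxc with ⟨h1, h2, _⟩ | ⟨h1, _, _⟩
      · exact ⟨h1, h2⟩
      · exfalso
        have kx := (key x hx).1
        have kc := (key c hc).1
        have n1 : (c.i : ℕ) = (x.i : ℕ) + 1 := by exact_mod_cast congrArg PNat.val h1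
        have n2 : (a.i : ℕ) = (x.i : ℕ) + 1 := by exact_mod_cast congrArg PNat.val kx
        have n3 : (a.i : ℕ) = (c.i : ℕ) + 1 := by exact_mod_cast congrArg PNat.val kc
        omega
    obtain ⟨e1, e2⟩ := step b hb hbc
    obtain ⟨f1, f2⟩ := step b0 hb0 hb0c
    exact ⟨e1.trans f1.symm, e2.trans f2.symm⟩
  -- `⟨b0.i, b0.j, a.j⟩` is an upper bound of `d`
  have hub : (⟨b0.i, b0.j, (a.j : WithTop ℕ+)⟩ : JiaP) ∈ upperBounds d := by
    intro b hb
    exact Or.inl ⟨(hij b hb).1, (hij b hb).2, (key b hb).2⟩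
  have hac := hlub.2 hub
  rcases hac with ⟨h1, _, _⟩ | ⟨_, _, h3⟩
  · have k0 := (key b0 hb0).1
    have h1' : a.i = b0.i := h1
    exact pnat_ne_add_one b0.i (h1'.symm.trans k0)
  · exact WithTop.coe_ne_top h3

/-- The open sets witnessing non-compactness. -/
def U (j : ℕ+) : Set JiaP := {p | (p.i = 2 ∧ p.j = j) ∨ 3 ≤ p.i}

lemma isUpperSet_U (j : ℕ+) : IsUpperSet (U j) := by
  intro x y hxy hx
  rcases hx with ⟨h1, h2⟩ | h3
  · rcases hxy with ⟨e1, e2, _⟩ | ⟨e1, _, _⟩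
    · exact Or.inl ⟨e1 ▸ h1, e2 ▸ h2⟩
    · refine Or.inr ?_
      rw [e1, h1]
      decide
  · rcases hxy with ⟨e1, _, _⟩ | ⟨e1, _, _⟩
    · exact Or.inr (e1 ▸ h3)
    · refine Or.inr ?_
      rw [e1]
      have hn : (3:ℕ) ≤ (x.i : ℕ) := by exact_mod_cast h3
      have h' : (3:ℕ) ≤ (x.i : ℕ) + 1 := by omega
      exact_mod_cast h'

end JiaPAux

/-- A set is saturated if it is the intersection of its open neighbourhoods. -/
def SaturatedSet {X : Type*} [TopologicalSpace X] (K : Set X) : Prop :=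
  K = ⋂₀ {U : Set X | IsOpen U ∧ K ⊆ U}

/-- A space is coherent if the intersection of any two compact saturated sets is compact. -/
def CoherentSpace (X : Type*) [TopologicalSpace X] : Prop :=
  ∀ K₁ K₂ : Set X, IsCompact K₁ → SaturatedSet K₁ → IsCompact K₂ → SaturatedSet K₂ →
    IsCompact (K₁ ∩ K₂)

/-- In Jia's dcpo, `↑(1,2,1) ∩ ↑(1,3,1) = {(2,j,∞) : j ∈ ℕ}`, and this set is not compact
in the Scott topology; hence the Scott space of `JiaP` is not coherent. -/
theorem JiaP_not_coherent :
    {p : JiaP | (⟨1, 2, (1 : ℕ+)⟩ : JiaP) ≤ p} ∩ {p : JiaP | (⟨1, 3, (1 : ℕ+)⟩ : JiaP) ≤ p} =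
      {p : JiaP | ∃ j : ℕ+, p = ⟨2, j, ⊤⟩} ∧
    ¬ @IsCompact JiaP (Topology.scott JiaP Set.univ) {p : JiaP | ∃ j : ℕ+, p = ⟨2, j, ⊤⟩} ∧
    ¬ @CoherentSpace JiaP (Topology.scott JiaP Set.univ) := by
  classical
  letI : TopologicalSpace JiaP := Topology.scott JiaP Set.univ
  haveI : Topology.IsScott JiaP Set.univ := ⟨rfl⟩
  open JiaPAux in
  -- compactness of principal filters
  have hcomp : ∀ x : JiaP, IsCompact {p : JiaP | x ≤ p} := by
    intro x
    refine isCompact_of_finite_subcover ?_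
    intro ι V hV hcov
    obtain ⟨i0, hi0⟩ := Set.mem_iUnion.mp (hcov (show x ∈ {p : JiaP | x ≤ p} from le_refl x))
    refine ⟨{i0}, fun p hp => ?_⟩
    exact Set.mem_biUnion (Finset.mem_singleton_self i0)
      ((Topology.IsScott.isUpperSet_of_isOpen (D := Set.univ) (hV i0)) hp hi0)
  -- saturation of principal filters
  have hsat : ∀ x : JiaP, SaturatedSet {p : JiaP | x ≤ p} := by
    intro x
    apply Set.Subset.antisymm
    · intro p hp
      exact Set.mem_sInter.mpr fun W hW => hW.2 hp
    · intro p hp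
      by_contra hxp
      have hmem : p ∈ (Set.Iic p)ᶜ := by
        refine Set.mem_sInter.mp hp _ ⟨(isClosed_Iic (a := p)).isOpen_compl, ?_⟩
        intro q hq hqle
        exact hxp (show x ≤ p from le_trans hq hqle)
      exact hmem (Set.mem_Iic.mpr le_rfl)
  -- the set equality
  have hset : {p : JiaP | (⟨1, 2, (1 : ℕ+)⟩ : JiaP) ≤ p} ∩
      {p : JiaP | (⟨1, 3, (1 : ℕ+)⟩ : JiaP) ≤ p} = {p : JiaP | ∃ j : ℕ+, p = ⟨2, j, ⊤⟩} := by
    ext ⟨i, j, m⟩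
    simp only [Set.mem_inter_iff, Set.mem_setOf_eq]
    constructor
    · rintro ⟨h1, h2⟩
      rcases h1 with ⟨e1, e2, _⟩ | ⟨e1, _, e3⟩
      · exfalso
        rcases h2 with ⟨f1, f2, _⟩ | ⟨f1, _, _⟩
        · have e2' : (2:ℕ+) = j := e2
          have f2' : (3:ℕ+) = j := f2
          exact absurd (e2'.trans f2'.symm) (by decide)
        · have e1' : (1:ℕ+) = i := e1
          have f1' : i = 1 + 1 := f1
          exact absurd (e1'.trans f1') (by decide)
      · have e1' : i = 1 + 1 := e1
        have e1'' : i = 2 := by rw [e1']; decide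
        have e3' : m = ⊤ := e3
        exact ⟨j, by rw [e1'', e3']⟩
    · rintro ⟨j', hj'⟩
      rw [hj']
      exact ⟨Or.inr ⟨(by decide : (2:ℕ+) = 1 + 1), one_le' _, rfl⟩,
        Or.inr ⟨(by decide : (2:ℕ+) = 1 + 1), one_le' _, rfl⟩⟩
  -- openness of the U j
  have hUopen : ∀ j : ℕ+, IsOpen (U j) := by
    intro j
    rw [Topology.IsScott.isOpen_iff_isUpperSet_and_dirSupInaccOn (D := Set.univ)]
    refine ⟨isUpperSet_U j, fun d _ hne hdir a hlub ha => ?_⟩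
    obtain ⟨b, hb, hbi, hbj⟩ := exists_eq_ij hne hdir hlub
    refine ⟨b, hb, ?_⟩
    rcases ha with ⟨h1, h2⟩ | h3
    · exact Or.inl ⟨hbi.trans h1, hbj.trans h2⟩
    · exact Or.inr (hbi.symm ▸ h3)
  -- non-compactness of S
  have hnc : ¬ IsCompact {p : JiaP | ∃ j : ℕ+, p = ⟨2, j, ⊤⟩} := by
    intro hc
    obtain ⟨t, ht⟩ := hc.elim_finite_subcover U hUopen (by
      rintro p ⟨j, rfl⟩
      exact Set.mem_iUnion.mpr ⟨j, Or.inl ⟨rfl, rfl⟩⟩)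
    obtain ⟨j, hj⟩ := Infinite.exists_notMem_finset t
    have hmem : (⟨2, j, ⊤⟩ : JiaP) ∈ {p : JiaP | ∃ j : ℕ+, p = ⟨2, j, ⊤⟩} := ⟨j, rfl⟩
    obtain ⟨j', hj', hUj'⟩ := Set.mem_iUnion₂.mp (ht hmem)
    rcases hUj' with ⟨_, e⟩ | h3
    · have e' : j = j' := e
      exact hj (e' ▸ hj')
    · have h3' : (3:ℕ+) ≤ 2 := h3
      exact absurd h3' (by decide)
  refine ⟨hset, hnc, fun hco => ?_⟩
  exact hnc (hset ▸ hco _ _ (hcomp _) (hsat _) (hcomp _) (hsat _))
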